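/- Let R and B be disjoint sets of n points each in the plane, and let M = {(rᵢ,bᵢ) : i = 1,…,n} be a perfect matching maximizing ∑ᵢ ||rᵢ - bᵢ||. Then for every pair i, j, the elliptical regions E(rᵢbᵢ) and E(rⱼbⱼ) with foci at the matched points and major axis √2 times the distance between the foci have a common point. -/

import Mathlib

open Finset

private lemma ellipse_of_near_mid {p q x : EuclideanSpace ℝ (Fin 2)}
    (h : ‖x - midpoint ℝ p q‖ ≤ ‖p - q‖ / 2) :
    ‖p - x‖ + ‖q - x‖ ≤ Real.sqrt 2 * ‖p - q‖ := by
  have hpar := parallelogram_law_with_norm ℝ (p - x) (q - x)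
  have hsum : (p - x) + (q - x) = (2 : ℝ) • (midpoint ℝ p q - x) := by
    calc (p - x) + (q - x) = (p + q) - (x + x) := by abel
      _ = (midpoint ℝ p q + midpoint ℝ p q) - (x + x) := by rw [midpoint_add_self]
      _ = (2 : ℝ) • (midpoint ℝ p q - x) := by rw [two_smul]; abel
  have hdiff : (p - x) - (q - x) = p - q := by abel
  rw [hsum, hdiff, norm_smul] at hpar
  have h2 : ‖(2:ℝ)‖ = 2 := by norm_num
  rw [h2] at hpar
  have hmx : ‖midpoint ℝ p q - x‖ = ‖x - midpoint ℝ p q‖ := norm_sub_rev _ _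
  rw [hmx] at hpar
  have hA : (0:ℝ) ≤ ‖p - x‖ := norm_nonneg _
  have hB : (0:ℝ) ≤ ‖q - x‖ := norm_nonneg _
  have hM : (0:ℝ) ≤ ‖x - midpoint ℝ p q‖ := norm_nonneg _
  have hsq : (‖p - x‖ + ‖q - x‖) ^ 2 ≤ 2 * ‖p - q‖ ^ 2 := by
    nlinarith [sq_nonneg (‖p - x‖ - ‖q - x‖), mul_self_le_mul_self hM h]
  calc ‖p - x‖ + ‖q - x‖ = Real.sqrt ((‖p - x‖ + ‖q - x‖) ^ 2) :=
        (Real.sqrt_sq (by positivity)).symm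
    _ ≤ Real.sqrt (2 * ‖p - q‖ ^ 2) := Real.sqrt_le_sqrt hsq
    _ = Real.sqrt 2 * ‖p - q‖ := by
        rw [Real.sqrt_mul (by norm_num), Real.sqrt_sq (norm_nonneg _)]

theorem ellipses_pairwise_intersect_of_maxsum
    (n : ℕ) (r b : Fin n → EuclideanSpace ℝ (Fin 2))
    (hr : Function.Injective r) (hb : Function.Injective b)
    (hdisj : Disjoint (Set.range r) (Set.range b))
    (hmax : ∀ σ : Equiv.Perm (Fin n),
      ∑ i : Fin n, ‖r i - b (σ i)‖ ≤ ∑ i : Fin n, ‖r i - b i‖)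
    (i j : Fin n) :
    ∃ x : EuclideanSpace ℝ (Fin 2),
      ‖r i - x‖ + ‖b i - x‖ ≤ Real.sqrt 2 * ‖r i - b i‖ ∧
      ‖r j - x‖ + ‖b j - x‖ ≤ Real.sqrt 2 * ‖r j - b j‖ := by
  -- key inequality from maximality: swapping i and j does not help
  have key : ‖r i - b j‖ + ‖r j - b i‖ ≤ ‖r i - b i‖ + ‖r j - b j‖ := by
    rcases eq_or_ne i j with rfl | hij
    · simp [norm_sub_rev (r i) (b i)]
    · have hswap := hmax (Equiv.swap i j)
      have split : ∀ f : Fin n → ℝ,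
          ∑ k : Fin n, f k = f i + (f j + ∑ k ∈ (univ.erase i).erase j, f k) := by
        intro f
        rw [Finset.add_sum_erase _ f (Finset.mem_erase.mpr ⟨hij.symm, mem_univ j⟩),
          Finset.add_sum_erase _ f (mem_univ i)]
      rw [split (fun k => ‖r k - b (Equiv.swap i j k)‖),
        split (fun k => ‖r k - b k‖)] at hswap
      have htail : ∑ k ∈ (univ.erase i).erase j, ‖r k - b (Equiv.swap i j k)‖
          = ∑ k ∈ (univ.erase i).erase j, ‖r k - b k‖ := by
        refine Finset.sum_congr rfl fun k hk => ?_
        have hkj : k ≠ j := (Finset.mem_erase.mp hk).1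
        have hki : k ≠ i := (Finset.mem_erase.mp (Finset.mem_erase.mp hk).2).1
        rw [Equiv.swap_apply_of_ne_of_ne hki hkj]
      simp only [Equiv.swap_apply_left, Equiv.swap_apply_right] at hswap
      rw [htail] at hswap
      linarith
  -- distances are positive
  have hrb : ∀ k : Fin n, r k ≠ b k := by
    intro k hk
    exact Set.disjoint_left.mp hdisj ⟨k, rfl⟩ ⟨k, hk.symm⟩
  have hdi : (0:ℝ) < ‖r i - b i‖ := by
    rw [norm_pos_iff]; exact sub_ne_zero.mpr (hrb i)
  have hdj : (0:ℝ) < ‖r j - b j‖ := by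
    rw [norm_pos_iff]; exact sub_ne_zero.mpr (hrb j)
  set di := ‖r i - b i‖ with hdi_def
  set dj := ‖r j - b j‖ with hdj_def
  set mi := midpoint ℝ (r i) (b i) with hmi_def
  set mj := midpoint ℝ (r j) (b j) with hmj_def
  have hmid : ‖mi - mj‖ ≤ (di + dj) / 2 := by
    have heq : (2:ℝ) • (mi - mj) = (r i - b j) + (b i - r j) := by
      calc (2:ℝ) • (mi - mj) = (mi + mi) - (mj + mj) := by rw [two_smul]; abel
        _ = (r i + b i) - (r j + b j) := by
            rw [hmi_def, hmj_def, midpoint_add_self, midpoint_add_self]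
        _ = (r i - b j) + (b i - r j) := by abel
    have hnorm : (2:ℝ) * ‖mi - mj‖ = ‖(r i - b j) + (b i - r j)‖ := by
      rw [← heq, norm_smul]; norm_num
    have h1 : ‖(r i - b j) + (b i - r j)‖ ≤ ‖r i - b j‖ + ‖b i - r j‖ := norm_add_le _ _
    have h2 : ‖b i - r j‖ = ‖r j - b i‖ := norm_sub_rev _ _
    rw [h2] at h1
    linarith
  set t : ℝ := di / (di + dj) with ht_def
  have hdij : (0:ℝ) < di + dj := by linarith
  have ht0 : 0 ≤ t := by positivity
  have ht1 : t ≤ 1 := by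
    rw [ht_def, div_le_one hdij]; linarith
  refine ⟨mi + t • (mj - mi), ?_, ?_⟩
  · apply ellipse_of_near_mid
    have hx : mi + t • (mj - mi) - mi = t • (mj - mi) := by module
    rw [← hmi_def, hx, norm_smul, Real.norm_eq_abs, abs_of_nonneg ht0]
    have : ‖mj - mi‖ = ‖mi - mj‖ := norm_sub_rev _ _
    rw [this]
    calc t * ‖mi - mj‖ ≤ t * ((di + dj) / 2) := by
          exact mul_le_mul_of_nonneg_left hmid ht0
      _ = di / 2 := by rw [ht_def]; field_simp
  · apply ellipse_of_near_mid
    have hx : mi + t • (mj - mi) - mj = (1 - t) • (mi - mj) := by module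
    rw [← hmj_def, hx, norm_smul, Real.norm_eq_abs, abs_of_nonneg (by linarith)]
    calc (1 - t) * ‖mi - mj‖ ≤ (1 - t) * ((di + dj) / 2) := by
          exact mul_le_mul_of_nonneg_left hmid (by linarith)
      _ = dj / 2 := by rw [ht_def]; field_simp; ring
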